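/- Let ε ∈ (0, 1/2] and let t ≥ 1 be an integer, and suppose n ≥ (1/ε)^{16t}. Then every 2-edge-colouring of the complete graph K_n in which each colour class has at least ε·n² edges contains two disjoint t-element vertex sets S and T and colours c₁, c₂, c₃ (each red or blue, not all three equal) such that every edge inside S has colour c₁, every edge inside T has colour c₂, and every edge between S and T has colour c₃. (Equivalently, K_n contains a complete subgraph on 2t vertices in which one colour class forms either a K_{t,t} or a clique K_t.) -/

import Mathlib

open Finset


variable {n : ℕ}


variable {n : ℕ}

def IsMonoOn (col : Fin n → Fin n → Bool) (c : Bool) (S : Finset (Fin n)) : Prop :=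
  ∀ u ∈ S, ∀ v ∈ S, u ≠ v → col u v = c

lemma ramsey2 (col : Fin n → Fin n → Bool) (hsym : ∀ u v, col u v = col v u) :
    ∀ k a b, a + b = k → ∀ X : Finset (Fin n), 2 ^ (a + b) ≤ X.card →
      (∃ S ⊆ X, S.card = a ∧ IsMonoOn col true S) ∨
      (∃ S ⊆ X, S.card = b ∧ IsMonoOn col false S) := by
  intro k
  induction k with
  | zero =>
    intro a b hab X _
    left
    have ha : a = 0 := by omega
    subst ha
    exact ⟨∅, empty_subset _, by simp, by simp [IsMonoOn]⟩
  | succ k ih =>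
    intro a b hab X hX
    match a, b with
    | 0, b => exact Or.inl ⟨∅, empty_subset _, by simp, by simp [IsMonoOn]⟩
    | a+1, 0 => exact Or.inr ⟨∅, empty_subset _, by simp, by simp [IsMonoOn]⟩
    | a+1, b+1 =>
      have hXne : X.Nonempty := by
        rw [← card_pos]
        calc 0 < 2 ^ (a+1+(b+1)) := Nat.pow_pos (by norm_num)
        _ ≤ X.card := hX
      obtain ⟨x, hx⟩ := hXne
      set Nt := (X.erase x).filter (fun y => col x y = true) with hNt
      set Nf := (X.erase x).filter (fun y => col x y = false) with hNf
      have hcards : Nt.card + Nf.card = (X.erase x).card := by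
        rw [hNt, hNf]
        have := Finset.card_filter_add_card_filter_not (s := X.erase x)
          (p := fun y => col x y = true)
        simpa [Bool.not_eq_true] using this
      have herase : (X.erase x).card = X.card - 1 := card_erase_of_mem hx
      have hbig : 2 ^ (a + (b+1)) ≤ Nt.card ∨ 2 ^ ((a+1) + b) ≤ Nf.card := by
        by_contra hcon
        push_neg at hcon
        have h1 : a + (b+1) = a + b + 1 := by omega
        have h2 : (a+1) + b = a + b + 1 := by omega
        have h3 : (a+1) + (b+1) = (a+b+1) + 1 := by omega
        rw [h1] at hcon; rw [h2] at hcon; rw [h3] at hX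
        have : 2 ^ (a+b+1+1) = 2 ^ (a+b+1) + 2 ^ (a+b+1) := by ring
        omega
      rcases hbig with hbig | hbig
      · have := ih a (b+1) (by omega) Nt hbig
        rcases this with ⟨S, hS, hcard, hmono⟩ | ⟨S, hS, hcard, hmono⟩
        · left
          have hxS : x ∉ S := fun h => (notMem_erase x X) (mem_of_mem_filter _ (hS h))
          refine ⟨insert x S, ?_, ?_, ?_⟩
          · intro y hy
            rcases mem_insert.mp hy with rfl | hy
            · exact hx
            · exact mem_of_mem_erase (mem_of_mem_filter _ (hS hy))
          · rw [card_insert_of_notMem hxS, hcard]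
          · intro u hu v hv huv
            rcases mem_insert.mp hu with hu' | hu'
            · rcases mem_insert.mp hv with hv' | hv'
              · exact absurd (hu'.trans hv'.symm) huv
              · rw [hu']; exact (mem_filter.mp (hS hv')).2
            · rcases mem_insert.mp hv with hv' | hv'
              · rw [hv', hsym]; exact (mem_filter.mp (hS hu')).2
              · exact hmono u hu' v hv' huv
        · right
          exact ⟨S, hS.trans ((filter_subset _ _).trans (erase_subset _ _)), hcard, hmono⟩
      · have := ih (a+1) b (by omega) Nf hbig
        rcases this with ⟨S, hS, hcard, hmono⟩ | ⟨S, hS, hcard, hmono⟩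
        · left
          exact ⟨S, hS.trans ((filter_subset _ _).trans (erase_subset _ _)), hcard, hmono⟩
        · right
          have hxS : x ∉ S := fun h => (notMem_erase x X) (mem_of_mem_filter _ (hS h))
          refine ⟨insert x S, ?_, ?_, ?_⟩
          · intro y hy
            rcases mem_insert.mp hy with rfl | hy
            · exact hx
            · exact mem_of_mem_erase (mem_of_mem_filter _ (hS hy))
          · rw [card_insert_of_notMem hxS, hcard]
          · intro u hu v hv huv
            rcases mem_insert.mp hu with hu' | hu'
            · rcases mem_insert.mp hv with hv' | hv'
              · exact absurd (hu'.trans hv'.symm) huv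
              · rw [hu']; exact (mem_filter.mp (hS hv')).2
            · rcases mem_insert.mp hv with hv' | hv'
              · rw [hv', hsym]; exact (mem_filter.mp (hS hu')).2
              · exact hmono u hu' v hv' huv

lemma ramseyMono (col : Fin n → Fin n → Bool) (hsym : ∀ u v, col u v = col v u)
    (k : ℕ) (X : Finset (Fin n)) (hX : 4 ^ k ≤ X.card) :
    ∃ c, ∃ S ⊆ X, S.card = k ∧ IsMonoOn col c S := by
  have h4 : (4:ℕ) ^ k = 2 ^ (k + k) := by
    rw [show (4:ℕ) = 2^2 by norm_num, ← pow_mul]; ring_nf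
  rcases ramsey2 col hsym (k+k) k k rfl X (by omega) with ⟨S, h⟩ | ⟨S, h⟩
  · exact ⟨true, S, h⟩
  · exact ⟨false, S, h⟩

lemma ramseyForced (col : Fin n → Fin n → Bool) (hsym : ∀ u v, col u v = col v u)
    (c : Bool) (k : ℕ) (X : Finset (Fin n)) (hX : 4 ^ k ≤ X.card)
    (hno : ¬ ∃ S ⊆ X, S.card = k ∧ IsMonoOn col (!c) S) :
    ∃ S ⊆ X, S.card = k ∧ IsMonoOn col c S := by
  obtain ⟨c', S, hS⟩ := ramseyMono col hsym k X hX
  rcases Bool.eq_or_eq_not c' c with rfl | rfl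
  · exact ⟨S, hS⟩
  · exact absurd ⟨S, hS⟩ hno


lemma two_pow_add_le (a b c : ℕ) (ha : a + 1 ≤ c) (hb : b + 1 ≤ c) : 2^a + 2^b ≤ 2^c := by
  have h1 : 2^a ≤ 2^(c-1) := Nat.pow_le_pow_right (by norm_num) (by omega)
  have h2 : 2^b ≤ 2^(c-1) := Nat.pow_le_pow_right (by norm_num) (by omega)
  have h4 : 2^(c-1+1) = 2^(c-1) * 2 := pow_succ 2 (c-1)
  have h5 : c - 1 + 1 = c := by omega
  rw [h5] at h4
  omega

lemma stage2_num (t : ℕ) (ht : 1 ≤ t) :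
    (2^(9*t))^t * (4^t)^(2*t) + 4^t * (2^(9*t))^(2*t)
      ≤ 2^(9*t-2) * (2^(9*t-2))^(2*t) := by
  obtain ⟨s, rfl⟩ : ∃ s, t = s + 1 := ⟨t - 1, by omega⟩
  have he : 9*(s+1) - 2 = 9*s+7 := by omega
  rw [he]
  have h4 : (4:ℕ) = 2^2 := by norm_num
  rw [h4]
  rw [← pow_mul, ← pow_mul, ← pow_mul, ← pow_mul, ← pow_mul, ← pow_mul, ← pow_add, ← pow_add, ← pow_add]
  apply two_pow_add_le <;> nlinarith [sq_nonneg s]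

lemma key_num1 (ε : ℝ) (hε0 : 0 < ε) (hε : ε ≤ 1/2) (t : ℕ) (ht : 1 ≤ t) (n : ℕ)
    (hn : (1/ε)^(16*t) ≤ (n:ℝ)) :
    (n:ℝ)^t * ((2^(12*t) : ℕ):ℝ)^(4*t) + ((4^t : ℕ):ℝ) * (n:ℝ)^(4*t)
      ≤ (ε * n) * (ε * n)^(4*t) := by
  set β : ℝ := 1/ε with hβ
  have hβ0 : (0:ℝ) < β := by positivity
  have hβ2 : (2:ℝ) ≤ β := by rw [hβ, le_div_iff₀ hε0]; linarith
  have hεβ : ε * β = 1 := by rw [hβ]; field_simp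
  have hn0 : (0:ℝ) < (n:ℝ) := lt_of_lt_of_le (by positivity) hn
  have key : ∀ a b : ℕ, (4*t+1) + a ≤ 16*t*b → (2:ℝ)^a ≤ ε^(4*t+1) * (n:ℝ)^b := by
    intro a b hab
    obtain ⟨d, hd, had⟩ : ∃ d, 16*t*b = (4*t+1) + d ∧ a ≤ d := by
      generalize 16*t*b = q at hab ⊢
      exact ⟨q - (4*t+1), by omega, by omega⟩
    calc (2:ℝ)^a ≤ (2:ℝ)^d := pow_le_pow_right₀ (by norm_num) had
      _ ≤ β^d := pow_le_pow_left₀ (by norm_num) hβ2 d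
      _ = (ε*β)^(4*t+1) * β^d := by rw [hεβ, one_pow, one_mul]
      _ = ε^(4*t+1) * β^(16*t*b) := by rw [mul_pow, hd, pow_add]; ring
      _ = ε^(4*t+1) * (β^(16*t))^b := by rw [← pow_mul]
      _ ≤ ε^(4*t+1) * (n:ℝ)^b := by
          apply mul_le_mul_of_nonneg_left _ (by positivity)
          exact pow_le_pow_left₀ (by positivity) hn b
  have hc1 : ((2^(12*t) : ℕ):ℝ)^(4*t) = (2:ℝ)^(48*t*t) := by
    push_cast
    rw [← pow_mul]
    congr 1
    ring
  have hc2 : ((4^t : ℕ):ℝ) = (2:ℝ)^(2*t) := by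
    push_cast
    rw [show (4:ℝ) = 2^2 by norm_num, ← pow_mul]
  have hRHS : (ε * n) * (ε * n)^(4*t) = ε^(4*t+1) * (n:ℝ)^(4*t+1) := by
    rw [← pow_succ', mul_pow]
  rw [hc1, hc2, hRHS]
  have hA : (n:ℝ)^t * (2:ℝ)^(48*t*t) ≤ (1/2) * (ε^(4*t+1) * (n:ℝ)^(4*t+1)) := by
    have h1 : (2:ℝ)^(48*t*t+1) ≤ ε^(4*t+1) * (n:ℝ)^(3*t+1) := by
      apply key
      nlinarith [ht]
    have h1' : (2:ℝ)^(48*t*t) * 2 ≤ ε^(4*t+1) * (n:ℝ)^(3*t+1) := by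
      rw [← pow_succ]; exact h1
    have h2 : (n:ℝ)^t * ((2:ℝ)^(48*t*t) * 2) ≤ (n:ℝ)^t * (ε^(4*t+1) * (n:ℝ)^(3*t+1)) :=
      mul_le_mul_of_nonneg_left h1' (by positivity)
    have h3 : (n:ℝ)^t * ((n:ℝ)^(3*t+1)) = (n:ℝ)^(4*t+1) := by
      rw [← pow_add]; congr 1; ring
    have e1 : (n:ℝ)^t * (ε^(4*t+1) * (n:ℝ)^(3*t+1)) = ε^(4*t+1) * (n:ℝ)^(4*t+1) := by
      rw [← h3]; ring
    nlinarith [h2, e1]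
  have hB : (2:ℝ)^(2*t) * (n:ℝ)^(4*t) ≤ (1/2) * (ε^(4*t+1) * (n:ℝ)^(4*t+1)) := by
    have h1 : (2:ℝ)^(2*t+1) ≤ ε^(4*t+1) * (n:ℝ)^1 := by
      apply key
      nlinarith [ht]
    have h1' : (2:ℝ)^(2*t) * 2 ≤ ε^(4*t+1) * (n:ℝ)^1 := by
      rw [← pow_succ]; exact h1
    have h2 : (n:ℝ)^(4*t) * ((2:ℝ)^(2*t) * 2) ≤ (n:ℝ)^(4*t) * (ε^(4*t+1) * (n:ℝ)^1) :=
      mul_le_mul_of_nonneg_left h1' (by positivity)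
    have e1 : (n:ℝ)^(4*t) * (ε^(4*t+1) * (n:ℝ)^1) = ε^(4*t+1) * (n:ℝ)^(4*t+1) := by
      rw [pow_succ]; ring
    nlinarith [h2, e1]
  linarith

lemma nat_small1 (t : ℕ) (ht : 1 ≤ t) : 4^t + t ≤ 2^(12*t) := by
  have h1 : t < 2^t := Nat.lt_two_pow_self (n := t)
  have h2 : (4:ℕ)^t = 2^(2*t) := by rw [show (4:ℕ) = 2^2 by norm_num, ← pow_mul]
  have h3 : 2^(2*t) + 2^t ≤ 2^(12*t) := two_pow_add_le _ _ _ (by omega) (by omega)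
  have h4 : 2^t ≤ 2^(12*t) := Nat.pow_le_pow_right (by norm_num) (by omega)
  omega

lemma nat_small2 (t : ℕ) (ht : 1 ≤ t) : 2^(11*t) + t ≤ 2^(12*t) := by
  have h1 : t < 2^t := Nat.lt_two_pow_self (n := t)
  have h3 : 2^(11*t) + 2^t ≤ 2^(12*t) := two_pow_add_le _ _ _ (by omega) (by omega)
  omega

lemma nat_small3 (t : ℕ) (ht : 1 ≤ t) : 2^(9*t) + 4^t ≤ 2^(11*t) := by
  have h2 : (4:ℕ)^t = 2^(2*t) := by rw [show (4:ℕ) = 2^2 by norm_num, ← pow_mul]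
  have h3 : 2^(9*t) + 2^(2*t) ≤ 2^(11*t) := two_pow_add_le _ _ _ (by omega) (by omega)
  omega

lemma nat_small4 (t : ℕ) (ht : 1 ≤ t) : 4^t + t ≤ 4^t + 4^t := by
  have := Nat.lt_two_pow_self (n := t)
  have h2 : 2^t ≤ 4^t := Nat.pow_le_pow_left (by norm_num) t
  omega



def codegSet (col : Fin n → Fin n → Bool) (c : Bool) (Y : Finset (Fin n))
    (S : Finset (Fin n)) : Finset (Fin n) :=
  Y.filter (fun y => ∀ x ∈ S, col x y = c)

lemma drc (col : Fin n → Fin n → Bool) (X Y : Finset (Fin n)) (c : Bool)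
    (r t m u : ℕ) (ht : 1 ≤ t) (hY : 0 < Y.card)
    (h D : ℝ) (hD : 0 ≤ D)
    (H : Finset (Fin n)) (hHX : H ⊆ X) (hh : h ≤ (H.card : ℝ))
    (hdeg : ∀ x ∈ H, D ≤ ((Y.filter (fun y => col x y = c)).card : ℝ))
    (hcount : (X.card : ℝ) ^ t * (m : ℝ) ^ r + (u : ℝ) * (Y.card : ℝ) ^ r ≤ h * D ^ r) :
    ∃ U ⊆ X, u ≤ U.card ∧ ∀ S ⊆ U, S.card = t → m ≤ (codegSet col c Y S).card := by
  classical
  set F := Fintype.piFinset (fun _ : Fin r => Y) with hF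
  set Ufun : (Fin r → Fin n) → Finset (Fin n) :=
    fun f => X.filter (fun x => ∀ i, col x (f i) = c) with hUfun
  set Bad := (X.powersetCard t).filter (fun S => (codegSet col c Y S).card < m) with hBad
  -- key identity 1
  have key1 : ∑ f ∈ F, (Ufun f).card
      = ∑ x ∈ X, ((Y.filter (fun y => col x y = c)).card) ^ r := by
    have : ∀ f, (Ufun f).card = ∑ x ∈ X, (if (∀ i, col x (f i) = c) then 1 else 0) := by
      intro f; simp only [hUfun]; rw [Finset.card_filter]
    simp only [this]
    rw [Finset.sum_comm]
    refine Finset.sum_congr rfl (fun x _ => ?_)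
    have hset : F.filter (fun f => ∀ i, col x (f i) = c)
        = Fintype.piFinset (fun _ : Fin r => Y.filter (fun y => col x y = c)) := by
      ext f
      simp [hF, Fintype.mem_piFinset, mem_filter, forall_and]
    calc ∑ f ∈ F, (if (∀ i, col x (f i) = c) then 1 else 0)
        = (F.filter (fun f => ∀ i, col x (f i) = c)).card := by
          rw [Finset.card_filter]
      _ = ((Y.filter (fun y => col x y = c)).card) ^ r := by
          rw [hset, Fintype.card_piFinset]; simp
  -- key identity 2
  have key2 : ∑ f ∈ F, (Bad.filter (fun S => S ⊆ Ufun f)).card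
      = ∑ S ∈ Bad, ((codegSet col c Y S).card) ^ r := by
    have : ∀ f, (Bad.filter (fun S => S ⊆ Ufun f)).card
        = ∑ S ∈ Bad, (if S ⊆ Ufun f then 1 else 0) := by
      intro f; rw [Finset.card_filter]
    simp only [this]
    rw [Finset.sum_comm]
    refine Finset.sum_congr rfl (fun S hS => ?_)
    have hSX : S ⊆ X := by
      rw [hBad] at hS
      exact (Finset.mem_powersetCard.mp (Finset.mem_of_mem_filter _ hS)).1
    have hset : F.filter (fun f => S ⊆ Ufun f)
        = Fintype.piFinset (fun _ : Fin r => codegSet col c Y S) := by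
      ext f
      simp only [hF, Fintype.mem_piFinset, mem_filter, codegSet, hUfun]
      constructor
      · rintro ⟨hf, hsub⟩ i
        exact ⟨hf i, fun x hx => ((Finset.mem_filter.mp (hsub hx)).2 i)⟩
      · intro hf
        refine ⟨fun i => (hf i).1, fun x hx => Finset.mem_filter.mpr ⟨hSX hx, fun i => (hf i).2 x hx⟩⟩
    calc ∑ f ∈ F, (if S ⊆ Ufun f then 1 else 0)
        = (F.filter (fun f => S ⊆ Ufun f)).card := by rw [Finset.card_filter]
      _ = ((codegSet col c Y S).card) ^ r := by
          rw [hset, Fintype.card_piFinset]; simp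
  -- lower bound for sum of degrees
  have lb : h * D ^ r ≤ (∑ x ∈ X, ((Y.filter (fun y => col x y = c)).card) ^ r : ℝ) := by
    push_cast
    calc h * D ^ r ≤ (H.card : ℝ) * D ^ r := by
          apply mul_le_mul_of_nonneg_right hh (by positivity)
      _ = ∑ _x ∈ H, D ^ r := by rw [Finset.sum_const, nsmul_eq_mul]
      _ ≤ ∑ x ∈ H, (((Y.filter (fun y => col x y = c)).card : ℝ)) ^ r := by
          refine Finset.sum_le_sum (fun x hx => ?_)
          exact pow_le_pow_left₀ hD (hdeg x hx) r
      _ ≤ ∑ x ∈ X, (((Y.filter (fun y => col x y = c)).card : ℝ)) ^ r := by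
          refine Finset.sum_le_sum_of_subset_of_nonneg hHX (fun x _ _ => by positivity)
  -- upper bound for bad sum
  have ub : (∑ S ∈ Bad, ((codegSet col c Y S).card) ^ r : ℝ)
      ≤ (X.card : ℝ) ^ t * (m : ℝ) ^ r := by
    push_cast
    calc (∑ S ∈ Bad, (((codegSet col c Y S).card : ℝ)) ^ r)
        ≤ ∑ _S ∈ Bad, ((m : ℝ)) ^ r := by
          refine Finset.sum_le_sum (fun S hS => ?_)
          have : (codegSet col c Y S).card < m := (Finset.mem_filter.mp hS).2
          exact pow_le_pow_left₀ (by positivity) (by exact_mod_cast this.le) r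
      _ = (Bad.card : ℝ) * (m : ℝ) ^ r := by rw [Finset.sum_const, nsmul_eq_mul]
      _ ≤ (X.card : ℝ) ^ t * (m : ℝ) ^ r := by
          apply mul_le_mul_of_nonneg_right _ (by positivity)
          have h1 : Bad.card ≤ (X.powersetCard t).card := Finset.card_filter_le _ _
          have h2 : (X.powersetCard t).card = X.card.choose t := Finset.card_powersetCard t X
          have h3 : X.card.choose t ≤ X.card ^ t := Nat.choose_le_pow _ _
          exact_mod_cast h1.trans (h2 ▸ h3)
  -- averaging
  have hFcard : (F.card : ℝ) = (Y.card : ℝ) ^ r := by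
    rw [hF, Fintype.card_piFinset]; push_cast; simp
  have havg : ∃ f ∈ F, (u : ℝ) ≤ ((Ufun f).card : ℝ) - ((Bad.filter (fun S => S ⊆ Ufun f)).card : ℝ) := by
    by_contra hcon
    push_neg at hcon
    have hsum : ∑ f ∈ F, (((Ufun f).card : ℝ) - ((Bad.filter (fun S => S ⊆ Ufun f)).card : ℝ))
        < ∑ _f ∈ F, (u : ℝ) := by
      apply Finset.sum_lt_sum_of_nonempty
      · rw [← Finset.card_pos, hF, Fintype.card_piFinset]
        simpa using pow_pos hY r
      · exact hcon
    rw [Finset.sum_const, nsmul_eq_mul, Finset.sum_sub_distrib] at hsum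
    have e1 : ∑ f ∈ F, ((Ufun f).card : ℝ) = ∑ x ∈ X, (((Y.filter (fun y => col x y = c)).card : ℝ)) ^ r := by
      exact_mod_cast congrArg (Nat.cast : ℕ → ℝ) key1
    have e2 : ∑ f ∈ F, ((Bad.filter (fun S => S ⊆ Ufun f)).card : ℝ)
        = ∑ S ∈ Bad, (((codegSet col c Y S).card : ℝ)) ^ r := by
      exact_mod_cast congrArg (Nat.cast : ℕ → ℝ) key2
    rw [e1, e2] at hsum
    have : h * D ^ r - (X.card : ℝ) ^ t * (m : ℝ) ^ r < (F.card : ℝ) * u := by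
      push_cast at lb ub ⊢
      nlinarith
    rw [hFcard] at this
    nlinarith
  obtain ⟨f, hfF, hfavg⟩ := havg
  set B := Bad.filter (fun S => S ⊆ Ufun f) with hB
  have hcardUB : u + B.card ≤ (Ufun f).card := by
    have h1 : ((u : ℝ) + (B.card : ℝ)) ≤ ((Ufun f).card : ℝ) := by linarith
    exact_mod_cast h1
  -- representatives
  obtain ⟨y0, _⟩ := Finset.card_pos.mp hY
  set rep : Finset (Fin n) → Fin n := fun S => if hs : S.Nonempty then hs.choose else y0 with hrep
  have hrepmem : ∀ S : Finset (Fin n), S.Nonempty → rep S ∈ S := by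
    intro S hs
    rw [hrep]
    simp only [dif_pos hs]
    exact hs.choose_spec
  refine ⟨Ufun f \ B.image rep, ?_, ?_, ?_⟩
  · exact (Finset.sdiff_subset).trans (Finset.filter_subset _ _)
  · have h1 := Finset.le_card_sdiff (B.image rep) (Ufun f)
    have h2 : (B.image rep).card ≤ B.card := Finset.card_image_le
    omega
  · intro S hSU hScard
    by_contra hbad
    push_neg at hbad
    have hSB : S ∈ B := by
      rw [hB, hBad]
      refine Finset.mem_filter.mpr ⟨Finset.mem_filter.mpr ⟨?_, hbad⟩, ?_⟩
      · exact Finset.mem_powersetCard.mpr ⟨hSU.trans ((Finset.sdiff_subset).trans (Finset.filter_subset _ _)), hScard⟩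
      · exact hSU.trans Finset.sdiff_subset
    have hSne : S.Nonempty := Finset.card_pos.mp (by omega)
    have : rep S ∈ B.image rep := Finset.mem_image_of_mem rep hSB
    have hmem := hSU (hrepmem S hSne)
    exact (Finset.mem_sdiff.mp hmem).2 this



lemma sum_deg_eq (col : Fin n → Fin n → Bool) (X Y : Finset (Fin n)) (c : Bool) :
    ∑ x ∈ X, (Y.filter (fun y => col x y = c)).card
      = ((X ×ˢ Y).filter (fun p => col p.1 p.2 = c)).card := by
  classical
  rw [Finset.card_eq_sum_card_fiberwise
    (f := fun p : Fin n × Fin n => p.1) (t := X)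
    (fun p hp => (Finset.mem_product.mp (Finset.mem_of_mem_filter _ hp)).1)]
  refine Finset.sum_congr rfl (fun x hx => ?_)
  apply Finset.card_bij (fun y _ => (x, y))
  · intro y hy
    have hy' := Finset.mem_filter.mp hy
    exact Finset.mem_filter.mpr ⟨Finset.mem_filter.mpr ⟨Finset.mem_product.mpr ⟨hx, hy'.1⟩, hy'.2⟩, rfl⟩
  · intro a ha b hb hab
    simpa using congrArg Prod.snd hab
  · intro p hp
    simp only [Finset.mem_filter, Finset.mem_product] at hp
    obtain ⟨⟨⟨hp1, hp2⟩, hp3⟩, hp4⟩ := hp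
    exact ⟨p.2, Finset.mem_filter.mpr ⟨hp2, by rw [← hp4]; exact hp3⟩, by rw [← hp4]⟩

lemma highdeg (col : Fin n → Fin n → Bool) (X Y : Finset (Fin n)) (c : Bool) (E D : ℝ)
    (hD : 0 ≤ D)
    (hE : E ≤ (((X ×ˢ Y).filter (fun p => col p.1 p.2 = c)).card : ℝ)) :
    E - D * X.card ≤
      ((X.filter (fun x => D ≤ ((Y.filter (fun y => col x y = c)).card : ℝ))).card : ℝ)
        * Y.card := by
  classical
  set dg : Fin n → ℝ := fun x => ((Y.filter (fun y => col x y = c)).card : ℝ) with hdg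
  have hsum : E ≤ ∑ x ∈ X, dg x := by
    rw [hdg]
    have e := sum_deg_eq col X Y c
    have e2 : (∑ x ∈ X, ((Y.filter (fun y => col x y = c)).card : ℝ))
        = (((X ×ˢ Y).filter (fun p => col p.1 p.2 = c)).card : ℝ) := by
      exact_mod_cast congrArg (Nat.cast : ℕ → ℝ) e
    rw [e2]
    exact hE
  set H := X.filter (fun x => D ≤ dg x) with hH
  have hsplit : ∑ x ∈ X, dg x = ∑ x ∈ H, dg x + ∑ x ∈ X.filter (fun x => ¬ (D ≤ dg x)), dg x := by
    rw [hH]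
    exact (Finset.sum_filter_add_sum_filter_not X _ dg).symm
  have h1 : ∑ x ∈ H, dg x ≤ (H.card : ℝ) * Y.card := by
    calc ∑ x ∈ H, dg x ≤ ∑ _x ∈ H, (Y.card : ℝ) := by
          refine Finset.sum_le_sum (fun x _ => ?_)
          simp only [hdg]
          exact_mod_cast Finset.card_filter_le _ _
      _ = (H.card : ℝ) * Y.card := by rw [Finset.sum_const, nsmul_eq_mul]
  have h2 : ∑ x ∈ X.filter (fun x => ¬ (D ≤ dg x)), dg x ≤ D * X.card := by
    calc ∑ x ∈ X.filter (fun x => ¬ (D ≤ dg x)), dg x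
        ≤ ∑ _x ∈ X.filter (fun x => ¬ (D ≤ dg x)), D := by
          refine Finset.sum_le_sum (fun x hx => ?_)
          exact le_of_not_ge (Finset.mem_filter.mp hx).2
      _ = ((X.filter (fun x => ¬ (D ≤ dg x))).card : ℝ) * D := by
          rw [Finset.sum_const, nsmul_eq_mul]
      _ ≤ (X.card : ℝ) * D := by
          apply mul_le_mul_of_nonneg_right _ hD
          exact_mod_cast Finset.card_filter_le _ _
      _ = D * X.card := by ring
  linarith

lemma stage1_pairs (col : Fin n → Fin n → Bool) (hsym : ∀ u v, col u v = col v u)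
    (c : Bool) (ε : ℝ)
    (hbal : ε * n ^ 2 ≤
        (((univ : Finset (Fin n × Fin n)).filter
          fun p => p.1 < p.2 ∧ col p.1 p.2 = c).card : ℝ)) :
    2 * (ε * n ^ 2) ≤
      ((((univ : Finset (Fin n)) ×ˢ (univ : Finset (Fin n))).filter
        (fun p => col p.1 p.2 = c)).card : ℝ) := by
  classical
  set P := (((univ : Finset (Fin n)) ×ˢ (univ : Finset (Fin n))).filter
        (fun p => col p.1 p.2 = c)) with hP
  set Plt := ((univ : Finset (Fin n × Fin n)).filter
          fun p => p.1 < p.2 ∧ col p.1 p.2 = c) with hPlt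
  set Pgt := ((univ : Finset (Fin n × Fin n)).filter
          fun p => p.2 < p.1 ∧ col p.1 p.2 = c) with hPgt
  have hcardeq : Plt.card = Pgt.card := by
    apply Finset.card_bij (fun p _ => (p.2, p.1))
    · intro p hp
      simp only [hPlt, hPgt, Finset.mem_filter, Finset.mem_univ, true_and] at *
      exact ⟨hp.1, by rw [hsym]; exact hp.2⟩
    · intro a _ b _ hab
      have h1 := congrArg Prod.fst hab
      have h2 := congrArg Prod.snd hab
      simp at h1 h2
      exact Prod.ext h2 h1
    · intro p hp
      simp only [hPlt, hPgt, Finset.mem_filter, Finset.mem_univ, true_and] at hp ⊢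
      exact ⟨(p.2, p.1), ⟨hp.1, by rw [hsym]; exact hp.2⟩, rfl⟩
  have hsub : Plt ∪ Pgt ⊆ P := by
    intro p hp
    rw [hP]
    rcases Finset.mem_union.mp hp with hp | hp <;>
      simp only [hPlt, hPgt, Finset.mem_filter, Finset.mem_univ, true_and] at hp <;>
      exact Finset.mem_filter.mpr ⟨Finset.mem_product.mpr ⟨Finset.mem_univ _, Finset.mem_univ _⟩, hp.2⟩
  have hdisj : Disjoint Plt Pgt := by
    rw [Finset.disjoint_left]
    intro p hp hp'
    simp only [hPlt, hPgt, Finset.mem_filter] at hp hp'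
    exact absurd hp'.2.1 (not_lt.mpr hp.2.1.le)
  have hcard : Plt.card + Pgt.card ≤ P.card := by
    rw [← Finset.card_union_of_disjoint hdisj]
    exact Finset.card_le_card hsub
  have : (Plt.card : ℝ) + (Pgt.card : ℝ) ≤ (P.card : ℝ) := by exact_mod_cast hcard
  rw [← hcardeq] at this
  linarith

def HasPattern (col : Fin n → Fin n → Bool) (t : ℕ) : Prop :=
  ∃ (S T : Finset (Fin n)) (c₁ c₂ c₃ : Bool),
    Disjoint S T ∧ S.card = t ∧ T.card = t ∧
    ¬(c₁ = c₂ ∧ c₂ = c₃) ∧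
    (∀ u ∈ S, ∀ v ∈ S, u ≠ v → col u v = c₁) ∧
    (∀ u ∈ T, ∀ v ∈ T, u ≠ v → col u v = c₂) ∧
    (∀ u ∈ S, ∀ v ∈ T, col u v = c₃)

lemma stageOne (col : Fin n → Fin n → Bool) (hsym : ∀ u v, col u v = col v u)
    (ε : ℝ) (hε0 : 0 < ε) (hε : ε ≤ 1/2) (t : ℕ) (ht : 1 ≤ t)
    (hn : (1/ε) ^ (16 * t) ≤ (n : ℝ)) (c : Bool)
    (hbalc : ε * n ^ 2 ≤
        (((univ : Finset (Fin n × Fin n)).filter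
          fun p => p.1 < p.2 ∧ col p.1 p.2 = c).card : ℝ)) :
    HasPattern col t ∨
      ∃ F : Finset (Fin n), 2^(11*t) ≤ F.card ∧
        ¬ ∃ S ⊆ F, S.card = t ∧ IsMonoOn col (!c) S := by
  classical
  have hβ2 : (2:ℝ) ≤ 1/ε := by rw [le_div_iff₀ hε0]; linarith
  have hn2 : (2:ℝ)^(16*t) ≤ (n:ℝ) :=
    le_trans (pow_le_pow_left₀ (by norm_num) hβ2 _) hn
  have hnn : 0 < n := by
    by_contra h
    push_neg at h
    interval_cases n
    · simp at hn2
      nlinarith [pow_pos (show (0:ℝ) < 2 by norm_num) (16*t)]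
  have hεn : (0:ℝ) < ε * n := by positivity
  have hcu : (univ : Finset (Fin n)).card = n := by simp
  -- high degree vertices
  have hpairs := stage1_pairs col hsym c ε hbalc
  have hhd := highdeg col univ univ c (2*(ε*(n:ℝ)^2)) (ε*(n:ℝ)) hεn.le hpairs
  rw [hcu] at hhd
  set Hd := (univ : Finset (Fin n)).filter
      (fun x => ε*(n:ℝ) ≤ (((univ : Finset (Fin n)).filter (fun y => col x y = c)).card : ℝ)) with hHd
  have hHcard : ε * (n:ℝ) ≤ (Hd.card : ℝ) := by
    have hn0 : (0:ℝ) < (n:ℝ) := by exact_mod_cast hnn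
    nlinarith [hhd]
  -- DRC
  have hcount : ((univ : Finset (Fin n)).card : ℝ) ^ t * ((2^(12*t) : ℕ) : ℝ) ^ (4*t)
      + ((4^t : ℕ) : ℝ) * (((univ : Finset (Fin n)).card : ℝ)) ^ (4*t)
      ≤ (ε*(n:ℝ)) * (ε*(n:ℝ)) ^ (4*t) := by
    rw [hcu]
    exact key_num1 ε hε0 hε t ht n hn
  obtain ⟨U, hUX, hUcard, hUgood⟩ :=
    drc col univ univ c (4*t) t (2^(12*t)) (4^t) ht (by rw [hcu]; exact hnn)
      (ε*(n:ℝ)) (ε*(n:ℝ)) hεn.le Hd (filter_subset _ _) hHcard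
      (fun x hx => (Finset.mem_filter.mp hx).2) hcount
  by_cases hopp : ∃ S ⊆ U, S.card = t ∧ IsMonoOn col (!c) S
  · obtain ⟨S, hSU, hScard, hSmono⟩ := hopp
    have hcod : 2^(12*t) ≤ (codegSet col c univ S).card := hUgood S hSU hScard
    set N := codegSet col c univ S \ S with hN
    have hNcard : 4^t ≤ N.card := by
      have h1 : (codegSet col c univ S).card - S.card ≤ N.card := by
        rw [hN]; exact Finset.le_card_sdiff _ _
      have h2 := nat_small1 t ht
      have h3 : S.card = t := hScard
      omega
    obtain ⟨c₂, T, hTN, hTcard, hTmono⟩ := ramseyMono col hsym t N hNcard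
    left
    refine ⟨S, T, !c, c₂, c, ?_, hScard, hTcard, ?_, hSmono, hTmono, ?_⟩
    · rw [Finset.disjoint_right]
      intro v hv
      exact (Finset.mem_sdiff.mp (hTN hv)).2
    · rintro ⟨h1, h2⟩
      rw [h2] at h1
      cases c <;> simp at h1
    · intro u hu v hv
      have := (Finset.mem_filter.mp (Finset.mem_sdiff.mp (hTN hv)).1).2
      exact this u hu
  · obtain ⟨S, hSU, hScard, hSmono⟩ := ramseyForced col hsym c t U hUcard hopp
    have hcod : 2^(12*t) ≤ (codegSet col c univ S).card := hUgood S hSU hScard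
    set N := codegSet col c univ S \ S with hN
    have hNcard : 2^(11*t) ≤ N.card := by
      have h1 : (codegSet col c univ S).card - S.card ≤ N.card := by
        rw [hN]; exact Finset.le_card_sdiff _ _
      have h2 := nat_small2 t ht
      have h3 : S.card = t := hScard
      omega
    by_cases hopp2 : ∃ T ⊆ N, T.card = t ∧ IsMonoOn col (!c) T
    · obtain ⟨T, hTN, hTcard, hTmono⟩ := hopp2
      left
      refine ⟨S, T, c, !c, c, ?_, hScard, hTcard, ?_, hSmono, hTmono, ?_⟩
      · rw [Finset.disjoint_right]
        intro v hv
        exact (Finset.mem_sdiff.mp (hTN hv)).2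
      · rintro ⟨h1, _⟩
        cases c <;> simp at h1
      · intro u hu v hv
        have := (Finset.mem_filter.mp (Finset.mem_sdiff.mp (hTN hv)).1).2
        exact this u hu
    · right
      exact ⟨N, hNcard, hopp2⟩

lemma filter_swap_card (col : Fin n → Fin n → Bool) (hsym : ∀ u v, col u v = col v u)
    (X Y : Finset (Fin n)) (c : Bool) :
    ((X ×ˢ Y).filter (fun p => col p.1 p.2 = c)).card
      = ((Y ×ˢ X).filter (fun p => col p.1 p.2 = c)).card := by
  apply Finset.card_bij (fun p _ => (p.2, p.1))
  · intro p hp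
    obtain ⟨hm, hc⟩ := Finset.mem_filter.mp hp
    obtain ⟨h1, h2⟩ := Finset.mem_product.mp hm
    exact Finset.mem_filter.mpr ⟨Finset.mem_product.mpr ⟨h2, h1⟩, by rw [hsym]; exact hc⟩
  · intro a _ b _ hab
    have h1 := congrArg Prod.fst hab
    have h2 := congrArg Prod.snd hab
    simp at h1 h2
    exact Prod.ext h2 h1
  · intro p hp
    obtain ⟨hm, hc⟩ := Finset.mem_filter.mp hp
    obtain ⟨h1, h2⟩ := Finset.mem_product.mp hm
    exact ⟨(p.2, p.1), Finset.mem_filter.mpr ⟨Finset.mem_product.mpr ⟨h2, h1⟩, by rw [hsym]; exact hc⟩, rfl⟩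

lemma stageTwoCore (col : Fin n → Fin n → Bool) (hsym : ∀ u v, col u v = col v u)
    (t : ℕ) (ht : 1 ≤ t) (W Z : Finset (Fin n)) (cstar : Bool)
    (hdisj : Disjoint W Z) (hW : W.card = 2^(9*t)) (hZ : Z.card = 2^(9*t))
    (hmaj : 2^(9*t) * 2^(9*t) ≤ 2 * ((W ×ˢ Z).filter (fun p => col p.1 p.2 = cstar)).card)
    (hnoW : ¬ ∃ S ⊆ W, S.card = t ∧ IsMonoOn col cstar S) :
    HasPattern col t := by
  classical
  set M4 : ℕ := 2^(9*t-2) with hM4def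
  have hM4 : 2^(9*t) = 4 * M4 := by
    rw [hM4def, show (4:ℕ) = 2^2 by norm_num, ← pow_add]
    congr 1
    omega
  have hM4pos : 0 < M4 := Nat.pow_pos (by norm_num)
  have hM4r : (0:ℝ) < (M4:ℝ) := by exact_mod_cast hM4pos
  -- high degree
  have hE : ((2^(9*t) * 2^(9*t) : ℕ) : ℝ)/2
      ≤ (((W ×ˢ Z).filter (fun p => col p.1 p.2 = cstar)).card : ℝ) := by
    have : ((2^(9*t) * 2^(9*t) : ℕ) : ℝ)
        ≤ 2 * (((W ×ˢ Z).filter (fun p => col p.1 p.2 = cstar)).card : ℝ) := by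
      exact_mod_cast hmaj
    linarith
  have hhd := highdeg col W Z cstar (((2^(9*t) * 2^(9*t) : ℕ) : ℝ)/2) ((M4:ℝ)) hM4r.le hE
  set Hd := W.filter
      (fun x => (M4:ℝ) ≤ ((Z.filter (fun y => col x y = cstar)).card : ℝ)) with hHd
  have hHcard : (M4:ℝ) ≤ (Hd.card : ℝ) := by
    rw [hW, hZ] at hhd
    have hc : ((2^(9*t) : ℕ) : ℝ) = 4 * (M4:ℝ) := by exact_mod_cast hM4
    push_cast at hhd hc ⊢
    nlinarith [hhd, hc, hM4r]
  have hcount : ((W.card : ℝ)) ^ t * ((4^t : ℕ) : ℝ) ^ (2*t)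
      + ((4^t : ℕ) : ℝ) * ((Z.card : ℝ)) ^ (2*t) ≤ (M4:ℝ) * (M4:ℝ) ^ (2*t) := by
    rw [hW, hZ, hM4def]
    exact_mod_cast stage2_num t ht
  obtain ⟨U, hUW, hUcard, hUgood⟩ :=
    drc col W Z cstar (2*t) t (4^t) (4^t) ht (by rw [hZ]; positivity)
      ((M4:ℝ)) ((M4:ℝ)) hM4r.le Hd (filter_subset _ _) hHcard
      (fun x hx => (Finset.mem_filter.mp hx).2) hcount
  have hnoU : ¬ ∃ S ⊆ U, S.card = t ∧ IsMonoOn col (!(!cstar)) S := by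
    rw [Bool.not_not]
    rintro ⟨S, hSU, h1, h2⟩
    exact hnoW ⟨S, hSU.trans hUW, h1, h2⟩
  obtain ⟨S, hSU, hScard, hSmono⟩ := ramseyForced col hsym (!cstar) t U hUcard hnoU
  have hcod : 4^t ≤ (codegSet col cstar Z S).card := hUgood S hSU hScard
  obtain ⟨c₂, T, hTN, hTcard, hTmono⟩ := ramseyMono col hsym t _ hcod
  refine ⟨S, T, !cstar, c₂, cstar, ?_, hScard, hTcard, ?_, hSmono, hTmono, ?_⟩
  · have hSW : S ⊆ W := hSU.trans hUW
    have hTZ : T ⊆ Z := hTN.trans (Finset.filter_subset _ _)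
    exact Finset.disjoint_of_subset_left hSW (Finset.disjoint_of_subset_right hTZ hdisj)
  · rintro ⟨h1, h2⟩
    rw [h2] at h1
    cases cstar <;> simp at h1
  · intro u hu v hv
    exact (Finset.mem_filter.mp (hTN hv)).2 u hu

/-- Theorem of Fox–Sudakov and Cutler–Montágh on globally balanced
2-colourings. Edges are counted as ordered pairs `p` with `p.1 < p.2`. -/
theorem stmt_3 (ε : ℝ) (hε0 : 0 < ε) (hε : ε ≤ 1/2) (t : ℕ) (ht : 1 ≤ t)
    (n : ℕ) (hn : (1/ε) ^ (16 * t) ≤ (n : ℝ))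
    (col : Fin n → Fin n → Bool) (hsym : ∀ u v, col u v = col v u)
    (hbal : ∀ c : Bool,
      ε * n ^ 2 ≤
        (((univ : Finset (Fin n × Fin n)).filter
          fun p => p.1 < p.2 ∧ col p.1 p.2 = c).card : ℝ)) :
    ∃ (S T : Finset (Fin n)) (c₁ c₂ c₃ : Bool),
      Disjoint S T ∧ S.card = t ∧ T.card = t ∧
      ¬(c₁ = c₂ ∧ c₂ = c₃) ∧
      (∀ u ∈ S, ∀ v ∈ S, u ≠ v → col u v = c₁) ∧
      (∀ u ∈ T, ∀ v ∈ T, u ≠ v → col u v = c₂) ∧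
      (∀ u ∈ S, ∀ v ∈ T, col u v = c₃) := by
  classical
  rcases stageOne col hsym ε hε0 hε t ht hn true (hbal true) with hp | ⟨Ft, hFt, hFtno⟩
  · exact hp
  rcases stageOne col hsym ε hε0 hε t ht hn false (hbal false) with hp | ⟨Ff, hFf, hFfno⟩
  · exact hp
  -- Ft has no false-clique of size t; Ff has no true-clique of size t
  simp only [Bool.not_true, Bool.not_false] at hFtno hFfno
  -- the intersection is small
  have hI : (Ft ∩ Ff).card < 4^t := by
    by_contra h
    push_neg at h
    obtain ⟨c, S, hS, hcard, hmono⟩ := ramseyMono col hsym t (Ft ∩ Ff) h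
    cases c
    · exact hFtno ⟨S, hS.trans Finset.inter_subset_left, hcard, hmono⟩
    · exact hFfno ⟨S, hS.trans Finset.inter_subset_right, hcard, hmono⟩
  -- carve out disjoint pieces
  have hX0 : 2^(9*t) ≤ (Ft \ Ff).card := by
    have h1 := Finset.card_sdiff_add_card_inter Ft Ff
    have h2 := nat_small3 t ht
    omega
  have hY0 : 2^(9*t) ≤ (Ff \ Ft).card := by
    have h1 := Finset.card_sdiff_add_card_inter Ff Ft
    have h2 := nat_small3 t ht
    have h3 : (Ff ∩ Ft).card = (Ft ∩ Ff).card := by rw [Finset.inter_comm]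
    omega
  obtain ⟨X, hXsub, hXcard⟩ := Finset.exists_subset_card_eq hX0
  obtain ⟨Y, hYsub, hYcard⟩ := Finset.exists_subset_card_eq hY0
  have hdisj : Disjoint X Y := by
    rw [Finset.disjoint_left]
    intro a haX haY
    have h1 := Finset.mem_sdiff.mp (hXsub haX)
    have h2 := Finset.mem_sdiff.mp (hYsub haY)
    exact h1.2 h2.1
  have hXno : ¬ ∃ S ⊆ X, S.card = t ∧ IsMonoOn col false S := by
    rintro ⟨S, hS, h1, h2⟩
    exact hFtno ⟨S, (hS.trans hXsub).trans Finset.sdiff_subset, h1, h2⟩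
  have hYno : ¬ ∃ S ⊆ Y, S.card = t ∧ IsMonoOn col true S := by
    rintro ⟨S, hS, h1, h2⟩
    exact hFfno ⟨S, (hS.trans hYsub).trans Finset.sdiff_subset, h1, h2⟩
  -- majority colour between X and Y
  have hsplit : ((X ×ˢ Y).filter (fun p => col p.1 p.2 = true)).card
      + ((X ×ˢ Y).filter (fun p => col p.1 p.2 = false)).card = 2^(9*t) * 2^(9*t) := by
    have h1 := Finset.card_filter_add_card_filter_not
      (s := X ×ˢ Y) (p := fun p => col p.1 p.2 = true)
    have h2 : (X ×ˢ Y).filter (fun p => ¬ (col p.1 p.2 = true))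
        = (X ×ˢ Y).filter (fun p => col p.1 p.2 = false) := by
      apply Finset.filter_congr
      intro p _
      simp
    rw [h2] at h1
    rw [h1, Finset.card_product, hXcard, hYcard]
  have hcases : 2^(9*t) * 2^(9*t) ≤ 2 * ((X ×ˢ Y).filter (fun p => col p.1 p.2 = true)).card
      ∨ 2^(9*t) * 2^(9*t) ≤ 2 * ((X ×ˢ Y).filter (fun p => col p.1 p.2 = false)).card := by
    omega
  rcases hcases with hmaj | hmaj
  · have hmaj' : 2^(9*t) * 2^(9*t)
        ≤ 2 * ((Y ×ˢ X).filter (fun p => col p.1 p.2 = true)).card := by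
      rw [← filter_swap_card col hsym X Y true]
      exact hmaj
    exact stageTwoCore col hsym t ht Y X true hdisj.symm hYcard hXcard hmaj' hYno
  · exact stageTwoCore col hsym t ht X Y false hdisj hXcard hYcard hmaj hXno
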